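/- arXiv:1905.00114 — 2 statements merged into one kernel-verified Lean document; each statement's English description precedes it below -/
import Mathlib

section
/- Let n ≥ 2 and let ξ : ℝⁿ → ℝ be smooth (C²) and satisfy ∂²ξ/∂xᵢ∂xⱼ = (Δξ/n)·δᵢⱼ for all i, j ∈ {1,…,n} at every point of ℝⁿ, where Δξ is the Euclidean Laplacian. Then there exist constants a, b₁,…,bₙ, c ∈ ℝ such that ξ(x₁,…,xₙ) = Σᵢ ((a/2)·xᵢ² + bᵢ·xᵢ) + c for all (x₁,…,xₙ) ∈ ℝⁿ. -/
open Set

section Aux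

variable {n : ℕ}

private lemma proj_apply' (i : Fin n) (x : EuclideanSpace ℝ (Fin n)) :
    EuclideanSpace.proj (𝕜 := ℝ) i x = x i := rfl

private lemma zero_apply' (i : Fin n) : (0 : EuclideanSpace ℝ (Fin n)) i = 0 := rfl

private lemma sub_apply' (x y : EuclideanSpace ℝ (Fin n)) (i : Fin n) :
    (x - y) i = x i - y i := rfl

private lemma clm_ext_basis {L M : EuclideanSpace ℝ (Fin n) →L[ℝ] ℝ}
    (h : ∀ i, L (EuclideanSpace.single i 1) = M (EuclideanSpace.single i 1)) : L = M := by
  apply ContinuousLinearMap.coe_injective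
  apply Module.Basis.ext (EuclideanSpace.basisFun (Fin n) ℝ).toBasis
  intro i
  simpa [OrthonormalBasis.coe_toBasis, EuclideanSpace.basisFun_apply] using h i

private lemma clm_apply_decomp (L : EuclideanSpace ℝ (Fin n) →L[ℝ] ℝ)
    (v : EuclideanSpace ℝ (Fin n)) :
    L v = ∑ i, v i * L (EuclideanSpace.single i 1) := by
  have hv := (EuclideanSpace.basisFun (Fin n) ℝ).toBasis.sum_repr v
  conv_lhs => rw [← hv]
  rw [map_sum]
  congr 1
  funext i
  rw [map_smul]
  simp [OrthonormalBasis.coe_toBasis_repr_apply, EuclideanSpace.basisFun_repr,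
    OrthonormalBasis.coe_toBasis, EuclideanSpace.basisFun_apply, smul_eq_mul]

private lemma hasDerivAt_line {g : EuclideanSpace ℝ (Fin n) → ℝ} (hg : Differentiable ℝ g)
    (z v : EuclideanSpace ℝ (Fin n)) :
    HasDerivAt (fun s : ℝ => g (z + s • v)) (fderiv ℝ g z v) 0 := by
  have h1 : HasDerivAt (fun s : ℝ => z + s • v) v 0 := by
    simpa using ((hasDerivAt_id (0 : ℝ)).smul_const v).const_add z
  have h2 : HasFDerivAt g (fderiv ℝ g z) (z + (0 : ℝ) • v) := by
    simpa using (hg z).hasFDerivAt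
  simpa [Function.comp_def] using h2.comp_hasDerivAt 0 h1

private lemma const_along {g : EuclideanSpace ℝ (Fin n) → ℝ} (hg : Differentiable ℝ g)
    (v : EuclideanSpace ℝ (Fin n)) (hv : ∀ y, fderiv ℝ g y v = 0)
    (x : EuclideanSpace ℝ (Fin n)) : g (x + v) = g x := by
  have hline : ∀ t : ℝ, HasDerivAt (fun t : ℝ => g (x + t • v)) 0 t := by
    intro t
    have h1 : HasDerivAt (fun s : ℝ => x + s • v) v t := by
      simpa using ((hasDerivAt_id t).smul_const v).const_add x
    have h2 := (hg (x + t • v)).hasFDerivAt.comp_hasDerivAt t h1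
    simpa [Function.comp_def, hv] using h2
  have := is_const_of_deriv_eq_zero (G := ℝ)
    (f := fun t : ℝ => g (x + t • v))
    (fun t => (hline t).differentiableAt) (fun t => (hline t).deriv) 1 0
  simpa using this

end Aux

theorem stmt_4 (n : ℕ) (hn : 2 ≤ n)
    (ξ : EuclideanSpace ℝ (Fin n) → ℝ)
    (hξ : ContDiff ℝ 2 ξ)
    (pd : Fin n → (EuclideanSpace ℝ (Fin n) → ℝ) → EuclideanSpace ℝ (Fin n) → ℝ)
    (hpd : ∀ i g x, pd i g x = fderiv ℝ g x (EuclideanSpace.single i 1))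
    (heq : ∀ (x : EuclideanSpace ℝ (Fin n)) (i j : Fin n),
      pd i (pd j ξ) x =
        ((∑ k : Fin n, pd k (pd k ξ) x) / n) * (if i = j then 1 else 0)) :
    ∃ (a : ℝ) (b : Fin n → ℝ) (c : ℝ),
      ∀ x : EuclideanSpace ℝ (Fin n),
        ξ x = (∑ i : Fin n, ((a / 2) * (x i) ^ 2 + b i * x i)) + c := by
  set e : Fin n → EuclideanSpace ℝ (Fin n) := fun i => EuclideanSpace.single i 1 with he
  set g : Fin n → EuclideanSpace ℝ (Fin n) → ℝ := fun j x => fderiv ℝ ξ x (e j) with hg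
  set f : EuclideanSpace ℝ (Fin n) → ℝ :=
    fun x => (∑ k : Fin n, pd k (pd k ξ) x) / n with hf
  have hpdg : ∀ j, pd j ξ = g j := fun j => funext fun x => hpd j ξ x
  have hgc : ∀ j, ContDiff ℝ 1 (g j) := by
    intro j
    have h1 : ContDiff ℝ 1 (fderiv ℝ ξ) := hξ.fderiv_right (by norm_num)
    exact (ContinuousLinearMap.apply ℝ ℝ (e j)).contDiff.comp h1
  have hgd : ∀ j, Differentiable ℝ (g j) := fun j => (hgc j).differentiable one_ne_zero
  have hkey : ∀ (x : EuclideanSpace ℝ (Fin n)) (i j : Fin n),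
      fderiv ℝ (g j) x (e i) = f x * (if i = j then 1 else 0) := by
    intro x i j
    have h1 := heq x i j
    rw [hpd i (pd j ξ) x, hpdg j] at h1
    exact h1
  have hdep : ∀ (j : Fin n) (x y : EuclideanSpace ℝ (Fin n)), x j = y j → f x = f y := by
    intro j x y hxy
    have hfz : ∀ z, f z = fderiv ℝ (g j) z (e j) := by
      intro z
      have := hkey z j j
      simpa using this.symm
    have hshift : ∀ w, g j (w + (x - y)) = g j w := by
      apply const_along (hgd j) (x - y)
      intro z
      rw [clm_apply_decomp (fderiv ℝ (g j) z) (x - y)]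
      have hterm : ∀ i : Fin n, (x - y) i * fderiv ℝ (g j) z (e i)
          = (x - y) i * (f z * (if i = j then 1 else 0)) := by
        intro i; rw [hkey z i j]
      rw [Finset.sum_congr rfl (fun i _ => hterm i)]
      have hsum : ∑ i : Fin n, (x - y) i * (f z * (if i = j then 1 else 0))
          = (x - y) j * f z := by
        rw [Finset.sum_eq_single j]
        · simp
        · intro i _ hij; simp [hij]
        · intro h; simp at h
      rw [hsum, sub_apply', hxy, sub_self, zero_mul]
    have hlines : (fun s : ℝ => g j (x + s • e j)) = fun s : ℝ => g j (y + s • e j) := by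
      funext s
      have h1 : x + s • e j = (y + s • e j) + (x - y) := by abel
      rw [h1, hshift]
    have hx := hasDerivAt_line (hgd j) x (e j)
    have hy := hasDerivAt_line (hgd j) y (e j)
    rw [hlines] at hx
    have := hx.unique hy
    rw [hfz x, hfz y, this]
  set a : ℝ := f 0 with ha
  have hconst : ∀ x, f x = a := by
    intro x
    have h2n : (2 : ℕ) ≤ n := hn
    set i0 : Fin n := ⟨0, by omega⟩
    set i1 : Fin n := ⟨1, by omega⟩
    have hne : i0 ≠ i1 := by simp [i0, i1, Fin.ext_iff]
    set z : EuclideanSpace ℝ (Fin n) := EuclideanSpace.single i0 (x i0) with hz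
    have h1 : f x = f z := by
      apply hdep i0
      simp [hz, EuclideanSpace.single_apply]
    have h2 : f z = f 0 := by
      apply hdep i1
      simp [hz, EuclideanSpace.single_apply, Ne.symm hne, zero_apply']
    rw [h1, h2]
  have hA : ∀ (x : EuclideanSpace ℝ (Fin n)) (i j : Fin n),
      fderiv ℝ (g j) x (e i) = if i = j then a else 0 := by
    intro x i j
    rw [hkey x i j, hconst x]
    by_cases h : i = j <;> simp [h]
  set b : Fin n → ℝ := fun i => g i 0 with hb
  have hlin : ∀ (x : EuclideanSpace ℝ (Fin n)) (i : Fin n), g i x = a * x i + b i := by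
    intro x i
    set h : EuclideanSpace ℝ (Fin n) → ℝ := fun y => g i y - a * y i with hh
    have hH : ∀ y, HasFDerivAt h
        (fderiv ℝ (g i) y - a • (EuclideanSpace.proj (𝕜 := ℝ) i)) y := by
      intro y
      exact ((hgd i y).hasFDerivAt).sub
        (((EuclideanSpace.proj (𝕜 := ℝ) i).hasFDerivAt).const_mul a)
    have hzero : ∀ y, fderiv ℝ h y = 0 := by
      intro y
      rw [(hH y).fderiv]
      apply clm_ext_basis
      intro k
      rw [ContinuousLinearMap.sub_apply, ContinuousLinearMap.smul_apply,
        ContinuousLinearMap.zero_apply]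
      have hAe : fderiv ℝ (g i) y (EuclideanSpace.single k 1) = if k = i then a else 0 :=
        hA y k i
      rw [hAe, proj_apply', EuclideanSpace.single_apply]
      by_cases hk : k = i
      · subst hk; simp
      · simp [hk, Ne.symm hk]
    have hdiff : Differentiable ℝ h := fun y => (hH y).differentiableAt
    have hc := is_const_of_fderiv_eq_zero hdiff hzero x 0
    have hx' : h x = g i x - a * x i := rfl
    have h0' : h 0 = g i 0 - a * (0 : ℝ) := by
      show g i 0 - a * (0 : EuclideanSpace ℝ (Fin n)) i = g i 0 - a * 0
      rw [zero_apply']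
    have hbi : b i = g i 0 := rfl
    rw [hx', h0'] at hc
    rw [hbi]
    linarith
  refine ⟨a, b, ξ 0, ?_⟩
  intro x
  set D : EuclideanSpace ℝ (Fin n) → (EuclideanSpace ℝ (Fin n) →L[ℝ] ℝ) := fun y =>
    ∑ i : Fin n,
      ((a / 2) • ((y i) • (EuclideanSpace.proj (𝕜 := ℝ) i)
          + (y i) • (EuclideanSpace.proj (𝕜 := ℝ) i))
        + (b i) • (EuclideanSpace.proj (𝕜 := ℝ) i)) with hDdef
  have hQ : ∀ y, HasFDerivAt
      (fun y : EuclideanSpace ℝ (Fin n) => ∑ i : Fin n, ((a / 2) * (y i) ^ 2 + b i * y i))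
      (D y) y := by
    intro y
    apply HasFDerivAt.fun_sum
    intro i _
    have hp : HasFDerivAt (fun z : EuclideanSpace ℝ (Fin n) => z i)
        (EuclideanSpace.proj (𝕜 := ℝ) i) y :=
      (EuclideanSpace.proj (𝕜 := ℝ) i).hasFDerivAt
    have hsq : HasFDerivAt (fun z : EuclideanSpace ℝ (Fin n) => (z i) ^ 2)
        ((y i) • (EuclideanSpace.proj (𝕜 := ℝ) i)
          + (y i) • (EuclideanSpace.proj (𝕜 := ℝ) i)) y := by
      simpa [pow_two] using hp.fun_mul hp
    exact (hsq.const_mul (a / 2)).add (hp.const_mul (b i))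
  have hφH : ∀ y, HasFDerivAt
      (fun y : EuclideanSpace ℝ (Fin n) =>
        ξ y - ∑ i : Fin n, ((a / 2) * (y i) ^ 2 + b i * y i))
      (fderiv ℝ ξ y - D y) y := by
    intro y
    exact ((hξ.differentiable (by norm_num) y).hasFDerivAt).sub (hQ y)
  have hφzero : ∀ y, fderiv ℝ
      (fun y : EuclideanSpace ℝ (Fin n) =>
        ξ y - ∑ i : Fin n, ((a / 2) * (y i) ^ 2 + b i * y i)) y = 0 := by
    intro y
    rw [(hφH y).fderiv]
    apply clm_ext_basis
    intro j
    rw [ContinuousLinearMap.sub_apply, ContinuousLinearMap.zero_apply]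
    have h1 : fderiv ℝ ξ y (EuclideanSpace.single j 1) = a * y j + b j := hlin y j
    have h2 : D y (EuclideanSpace.single j 1) = a * y j + b j := by
      rw [hDdef]
      rw [ContinuousLinearMap.sum_apply]
      have hterm : ∀ i : Fin n,
          ((a / 2) • ((y i) • (EuclideanSpace.proj (𝕜 := ℝ) i)
              + (y i) • (EuclideanSpace.proj (𝕜 := ℝ) i))
            + (b i) • (EuclideanSpace.proj (𝕜 := ℝ) i)) (EuclideanSpace.single j 1)
          = ((a / 2) * ((y i) * (if i = j then (1:ℝ) else 0)
              + (y i) * (if i = j then (1:ℝ) else 0))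
            + b i * (if i = j then (1:ℝ) else 0)) := by
        intro i
        simp only [ContinuousLinearMap.add_apply, ContinuousLinearMap.smul_apply,
          smul_eq_mul, proj_apply', EuclideanSpace.single_apply]
      rw [Finset.sum_congr rfl (fun i _ => hterm i)]
      rw [Finset.sum_eq_single j]
      · simp
        ring
      · intro i _ hij; simp [hij]
      · intro h; simp at h
    rw [h1, h2, sub_self]
  have hφdiff : Differentiable ℝ
      (fun y : EuclideanSpace ℝ (Fin n) =>
        ξ y - ∑ i : Fin n, ((a / 2) * (y i) ^ 2 + b i * y i)) :=
    fun y => (hφH y).differentiableAt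
  have hcst := is_const_of_fderiv_eq_zero hφdiff hφzero x 0
  have hcst' : ξ x - ∑ i : Fin n, ((a / 2) * (x i) ^ 2 + b i * x i)
      = ξ 0 - ∑ i : Fin n, ((a / 2) * ((0:EuclideanSpace ℝ (Fin n)) i) ^ 2
          + b i * (0:EuclideanSpace ℝ (Fin n)) i) := hcst
  have hQ0 : ∑ i : Fin n, ((a / 2) * ((0:EuclideanSpace ℝ (Fin n)) i) ^ 2
      + b i * (0:EuclideanSpace ℝ (Fin n)) i) = 0 := by
    simp [zero_apply']
  rw [hQ0, sub_zero] at hcst'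
  linarith
end

section
/- Let n ≥ 2 and let ξ : Hⁿ → ℝ be a C² function on the upper half-space Hⁿ = {x ∈ ℝⁿ : xₙ > 0} satisfying, for all i, j ∈ {1,…,n}: ∂²ξ/∂xᵢ∂xⱼ - (Δξ/n)·δᵢⱼ + ∂ᵢξ·(δⱼₙ/xₙ) + (δᵢₙ/xₙ)·∂ⱼξ - (2/n)·(∂ₙξ/xₙ)·δᵢⱼ = 0 at every point, where Δ is the Euclidean Laplacian. Then there exist constants a, b₁,…,bₙ, c₁,…,cₙ ∈ ℝ with ξ(x₁,…,xₙ) = (1/xₙ)·Σᵢ₌₁ⁿ ((a/2)·xᵢ² + bᵢxᵢ + cᵢ) for all x ∈ Hⁿ. -/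
open Set

theorem euclid_sum_single {n : ℕ} (x : EuclideanSpace ℝ (Fin n)) :
    x = ∑ i, x i • EuclideanSpace.single i (1:ℝ) := by
  ext j
  have h2 : EuclideanSpace.proj (𝕜 := ℝ) j (∑ i, x i • EuclideanSpace.single i (1:ℝ))
      = (∑ i, x i • EuclideanSpace.single i (1:ℝ)) j := rfl
  rw [← h2, map_sum]
  simp [EuclideanSpace.single_apply]

theorem euclid_clm_ext {n : ℕ} {F : Type*} [NormedAddCommGroup F] [NormedSpace ℝ F]
    {T S : EuclideanSpace ℝ (Fin n) →L[ℝ] F}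
    (h : ∀ i, T (EuclideanSpace.single i 1) = S (EuclideanSpace.single i 1)) : T = S := by
  ext v
  rw [euclid_sum_single v, map_sum, map_sum]
  exact Finset.sum_congr rfl fun i _ => by rw [map_smul, map_smul, h i]

theorem alg_helper (t nn P S pi pj pN d a b : ℝ) (ht : t ≠ 0) (hnn : nn ≠ 0)
    (he : P - S / nn * d + pi * (a / t) + b / t * pj - 2 / nn * (pN / t) * d = 0) :
    a * pi + (t * P + pj * b) = d * (t * (S / nn) + 2 / nn * pN) := by
  have hP : P = S / nn * d - pi * (a / t) - b / t * pj + 2 / nn * (pN / t) * d := by linarith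
  rw [hP]
  field_simp
  ring

set_option maxHeartbeats 2000000 in
theorem stmt_8 (n : ℕ) (hn : 2 ≤ n)
    (N : Fin n) (hN : (N : ℕ) = n - 1)
    (H : Set (EuclideanSpace ℝ (Fin n)))
    (hH : H = {x : EuclideanSpace ℝ (Fin n) | 0 < x N})
    (ξ : EuclideanSpace ℝ (Fin n) → ℝ)
    (hξ : ContDiffOn ℝ 2 ξ H)
    (pd : Fin n → (EuclideanSpace ℝ (Fin n) → ℝ) → EuclideanSpace ℝ (Fin n) → ℝ)
    (hpd : ∀ i g x, pd i g x = fderiv ℝ g x (EuclideanSpace.single i 1))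
    (heq : ∀ x ∈ H, ∀ i j : Fin n,
      pd i (pd j ξ) x
        - ((∑ k : Fin n, pd k (pd k ξ) x) / n) * (if i = j then 1 else 0)
        + pd i ξ x * ((if j = N then 1 else 0) / x N)
        + ((if i = N then 1 else 0) / x N) * pd j ξ x
        - (2 / n) * (pd N ξ x / x N) * (if i = j then 1 else 0) = 0) :
    ∃ (a : ℝ) (b c : Fin n → ℝ),
      ∀ x ∈ H, ξ x = (1 / x N) * ∑ i : Fin n, ((a / 2) * (x i) ^ 2 + b i * x i + c i) := by
  classical
  have hn0 : (n : ℝ) ≠ 0 := Nat.cast_ne_zero.mpr (by omega)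
  -- basic facts about H
  have hHo : IsOpen H := by
    rw [hH]
    exact isOpen_lt continuous_const (by exact (EuclideanSpace.proj (𝕜 := ℝ) N).continuous)
  have hHc : Convex ℝ H := by
    rw [hH]
    exact convex_halfSpace_gt ⟨fun a b => rfl, fun c x => rfl⟩ 0
  have hxne : ∀ x ∈ H, x N ≠ 0 := by
    intro x hx; rw [hH] at hx; exact ne_of_gt hx
  -- differentiability
  have hξd : ∀ z ∈ H, DifferentiableAt ℝ ξ z := fun z hz =>
    ((hξ.differentiableOn (by norm_num)).differentiableAt (hHo.mem_nhds hz))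
  have hF1 : ContDiffOn ℝ 1 (fun z => fderiv ℝ ξ z) H := hξ.fderiv_of_isOpen hHo (by norm_num)
  have hFd : ∀ z ∈ H, DifferentiableAt ℝ (fun z => fderiv ℝ ξ z) z := fun z hz =>
    ((hF1.differentiableOn (by norm_num)).differentiableAt (hHo.mem_nhds hz))
  have hproj : ∀ (i : Fin n) (z : EuclideanSpace ℝ (Fin n)), HasFDerivAt (fun w : EuclideanSpace ℝ (Fin n) => w i)
      (EuclideanSpace.proj (𝕜 := ℝ) i) z := fun i z => by
    exact (EuclideanSpace.proj (𝕜 := ℝ) i).hasFDerivAt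
  set u : EuclideanSpace ℝ (Fin n) → ℝ := fun z => z N * ξ z with hu_def
  set lam : EuclideanSpace ℝ (Fin n) → ℝ := fun x => x N * ((∑ k : Fin n, pd k (pd k ξ) x) / n) + (2 / n) * pd N ξ x
    with hlam_def
  -- the key second-derivative computation
  have key : ∀ x ∈ H, ∀ j : Fin n, ∃ D : EuclideanSpace ℝ (Fin n) →L[ℝ] ℝ, HasFDerivAt (pd j u) D x ∧
      ∀ i : Fin n, D (EuclideanSpace.single i 1) = if i = j then lam x else 0 := by
    intro x hx j
    set B := fderiv ℝ (fun z => fderiv ℝ ξ z) x with hB_def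
    have hB : HasFDerivAt (fun z => fderiv ℝ ξ z) B x := (hFd x hx).hasFDerivAt
    have hFj : HasFDerivAt (fun z => fderiv ℝ ξ z (EuclideanSpace.single j 1))
        (B.flip (EuclideanSpace.single j 1)) x := by
      simpa using hB.clm_apply (hasFDerivAt_const (EuclideanSpace.single j (1:ℝ)) x)
    set cj : ℝ := (EuclideanSpace.single j (1:ℝ)) N with hcj_def
    have huj : ∀ z ∈ H, pd j u z
        = ξ z * cj + z N * (fderiv ℝ ξ z (EuclideanSpace.single j 1)) := by
      intro z hz
      have hz' : HasFDerivAt u ((z N) • fderiv ℝ ξ z + (ξ z) • EuclideanSpace.proj (𝕜 := ℝ) N)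
          z := (hproj N z).mul (hξd z hz).hasFDerivAt
      rw [hpd, hz'.fderiv]
      simp only [ContinuousLinearMap.add_apply, ContinuousLinearMap.coe_smul', Pi.smul_apply,
        smul_eq_mul]
      have : EuclideanSpace.proj (𝕜 := ℝ) N (EuclideanSpace.single j (1:ℝ)) = cj := rfl
      rw [this]; ring
    have hev : (pd j u) =ᶠ[nhds x]
        (fun z => ξ z * cj + z N * (fderiv ℝ ξ z (EuclideanSpace.single j 1))) :=
      Filter.eventually_of_mem (hHo.mem_nhds hx) huj
    have hrhs := (((hξd x hx).hasFDerivAt.mul_const cj).add ((hproj N x).mul hFj))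
    refine ⟨_, hrhs.congr_of_eventuallyEq hev, ?_⟩
    intro i
    have hpdj : pd j ξ = fun z => fderiv ℝ ξ z (EuclideanSpace.single j 1) :=
      funext fun z => hpd j ξ z
    have hBij : pd i (pd j ξ) x = B (EuclideanSpace.single i 1) (EuclideanSpace.single j 1) := by
      rw [hpd, hpdj, hFj.fderiv]; rfl
    have hproje : ∀ k l : Fin n, EuclideanSpace.proj (𝕜 := ℝ) k (EuclideanSpace.single l (1:ℝ))
        = if (k : Fin n) = l then 1 else 0 := by
      intro k l
      show (EuclideanSpace.single l (1:ℝ)) k = _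
      simp [EuclideanSpace.single_apply]
    have he := heq x hx i j
    have hxN := hxne x hx
    have hd : (if i = j then lam x else 0)
        = (if i = j then (1:ℝ) else 0)
          * (x N * ((∑ k : Fin n, pd k (pd k ξ) x) / n) + 2 / n * pd N ξ x) := by
      by_cases hij : i = j <;> simp [hij, hlam_def]
    have halg := alg_helper (x N) n (pd i (pd j ξ) x) (∑ k : Fin n, pd k (pd k ξ) x)
      (pd i ξ x) (pd j ξ x) (pd N ξ x) (if i = j then 1 else 0) (if j = N then 1 else 0)
      (if i = N then 1 else 0) hxN hn0 he
    have hpr1 : EuclideanSpace.proj (𝕜 := ℝ) N (EuclideanSpace.single i (1:ℝ))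
        = if i = N then 1 else 0 := by
      show (EuclideanSpace.single i (1:ℝ)) N = _
      rcases eq_or_ne i N with h | h
      · simp [EuclideanSpace.single_apply, h]
      · simp [EuclideanSpace.single_apply, h, Ne.symm h]
    have hcjval : cj = if j = N then 1 else 0 := by
      rw [hcj_def]
      rcases eq_or_ne j N with h | h
      · simp [EuclideanSpace.single_apply, h]
      · simp [EuclideanSpace.single_apply, h, Ne.symm h]
    have hpi : fderiv ℝ ξ x (EuclideanSpace.single i 1) = pd i ξ x := (hpd i ξ x).symm
    have hpj : fderiv ℝ ξ x (EuclideanSpace.single j 1) = pd j ξ x := (hpd j ξ x).symm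
    simp only [ContinuousLinearMap.add_apply, ContinuousLinearMap.coe_smul', Pi.smul_apply,
      smul_eq_mul, ContinuousLinearMap.smulRight_apply, ContinuousLinearMap.flip_apply,
      ContinuousLinearMap.smul_apply]
    rw [← hBij, hpr1, hcjval, hpi, hpj, hd]
    linear_combination halg
  have pdiff : ∀ z ∈ H, ∀ j : Fin n, DifferentiableAt ℝ (pd j u) z := by
    intro z hz j; obtain ⟨D, hD, _⟩ := key z hz j; exact hD.differentiableAt
  -- pd i u is constant in direction e j for i ≠ j
  have lemA : ∀ x ∈ H, ∀ y ∈ H, ∀ i j : Fin n, i ≠ j → (∀ k, k ≠ j → x k = y k) →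
      pd i u x = pd i u y := by
    intro x hx y hy i j hij hagree
    set ej : EuclideanSpace ℝ (Fin n) := EuclideanSpace.single j 1 with hej
    have hy' : y = x + (y j - x j) • ej := by
      ext k
      have h1 : (x + (y j - x j) • ej) k = x k + (y j - x j) * ej k := rfl
      rw [h1, hej]
      rcases eq_or_ne k j with h | h
      · subst h; simp [EuclideanSpace.single_apply]
      · simp [EuclideanSpace.single_apply, h, hagree k h]
    set S : Set ℝ := {s : ℝ | x + s • ej ∈ H} with hS
    have hSo : IsOpen S := by
      have hcont : Continuous fun s : ℝ => x + s • ej :=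
        continuous_const.add (continuous_id.smul continuous_const)
      exact hHo.preimage hcont
    have hSc : Convex ℝ S := by
      intro s hs t ht av bv ha hb hab
      show x + (av * s + bv * t) • ej ∈ H
      have hxx : x + (av * s + bv * t) • ej = av • (x + s • ej) + bv • (x + t • ej) := by
        ext k
        have h1 : (x + (av * s + bv * t) • ej) k = x k + (av * s + bv * t) * ej k := rfl
        have h2 : (av • (x + s • ej) + bv • (x + t • ej)) k
            = av * (x k + s * ej k) + bv * (x k + t * ej k) := rfl
        rw [h1, h2]
        linear_combination x k * hab.symm
      rw [hxx]
      exact hHc hs ht ha hb hab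
    have hg : ∀ s ∈ S, HasDerivAt (fun t : ℝ => pd i u (x + t • ej)) 0 s := by
      intro s hs
      obtain ⟨D, hD, hDe⟩ := key _ hs i
      have hline : HasDerivAt (fun t : ℝ => x + t • ej) ej s := by
        simpa using ((hasDerivAt_id s).smul_const ej).const_add x
      have hcomp := hD.comp_hasDerivAt_of_eq s hline rfl
      have hc2 : HasDerivAt (fun t : ℝ => pd i u (x + t • ej)) (D ej) s := hcomp
      have hz : D ej = 0 := by rw [hej, hDe j, if_neg (Ne.symm hij)]
      rw [hz] at hc2
      exact hc2
    have h0S : (0:ℝ) ∈ S := by show x + (0:ℝ) • ej ∈ H; simpa using hx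
    have htS : (y j - x j) ∈ S := by show x + (y j - x j) • ej ∈ H; rw [← hy']; exact hy
    have hconst := hSc.is_const_of_fderivWithin_eq_zero
      (f := fun t : ℝ => pd i u (x + t • ej))
      (fun s hs => ((hg s hs).differentiableAt).differentiableWithinAt)
      (fun s hs => by
        rw [fderivWithin_of_isOpen hSo hs, (hg s hs).hasFDerivAt.fderiv]
        refine ContinuousLinearMap.ext fun t => ?_
        simp) h0S htS
    have h0 : x + (0:ℝ) • ej = x := by simp
    calc pd i u x = pd i u (x + (0:ℝ) • ej) := by rw [h0]
      _ = pd i u (x + (y j - x j) • ej) := hconst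
      _ = pd i u y := by rw [← hy']
  -- lam is invariant under changing one coordinate
  have lemB : ∀ x ∈ H, ∀ y ∈ H, ∀ j : Fin n, (∀ k, k ≠ j → x k = y k) → lam x = lam y := by
    intro x hx y hy j hagree
    obtain ⟨i, hij⟩ : ∃ i : Fin n, i ≠ j := by
      rcases eq_or_ne j ⟨0, by omega⟩ with h | h
      · exact ⟨⟨1, by omega⟩, by rw [h]; exact Fin.ne_of_val_ne (by norm_num)⟩
      · exact ⟨⟨0, by omega⟩, Ne.symm h⟩
    set ei : EuclideanSpace ℝ (Fin n) := EuclideanSpace.single i 1 with hei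
    have hder : ∀ z, z ∈ H → deriv (fun s : ℝ => pd i u (z + s • ei)) 0 = lam z := by
      intro z hz
      obtain ⟨D, hD, hDe⟩ := key z hz i
      have hline : HasDerivAt (fun s : ℝ => z + s • ei) ei 0 := by
        simpa using ((hasDerivAt_id (0:ℝ)).smul_const ei).const_add z
      have hcomp := hD.comp_hasDerivAt_of_eq 0 hline (by simp)
      have hc2 : HasDerivAt (fun s : ℝ => pd i u (z + s • ei)) (D ei) 0 := hcomp
      rw [hc2.deriv, hei, hDe i, if_pos rfl]
    have m1 : ∀ᶠ s : ℝ in nhds 0, (x + s • ei) ∈ H ∧ (y + s • ei) ∈ H := by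
      have hc1 : Continuous fun s : ℝ => x + s • ei :=
        continuous_const.add (continuous_id.smul continuous_const)
      have hc2 : Continuous fun s : ℝ => y + s • ei :=
        continuous_const.add (continuous_id.smul continuous_const)
      have e1 : x + (0:ℝ) • ei = x := by simp
      have e2 : y + (0:ℝ) • ei = y := by simp
      have m1a := hc1.continuousAt.preimage_mem_nhds (x := (0:ℝ))
        (by rw [e1]; exact hHo.mem_nhds hx)
      have m1b := hc2.continuousAt.preimage_mem_nhds (x := (0:ℝ))
        (by rw [e2]; exact hHo.mem_nhds hy)
      filter_upwards [m1a, m1b] with s hs1 hs2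
      exact ⟨hs1, hs2⟩
    have hev : (fun s : ℝ => pd i u (x + s • ei)) =ᶠ[nhds 0]
        (fun s : ℝ => pd i u (y + s • ei)) := by
      filter_upwards [m1] with s hs
      refine lemA _ hs.1 _ hs.2 i j hij (fun k hk => ?_)
      have h1 : (x + s • ei) k = x k + s * ei k := rfl
      have h2 : (y + s • ei) k = y k + s * ei k := rfl
      rw [h1, h2, hagree k hk]
    rw [← hder x hx, ← hder y hy]
    exact hev.deriv_eq
  -- lam is constant on H
  have lemC : ∀ x ∈ H, ∀ y ∈ H, lam x = lam y := by
    have ind : ∀ m : ℕ, ∀ x ∈ H, ∀ y ∈ H,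
        (∀ k : Fin n, m ≤ (k : ℕ) → x k = y k) → lam x = lam y := by
      intro m
      induction m with
      | zero =>
        intro x hx y hy hag
        have hxy : x = y := by ext k; exact hag k (Nat.zero_le _)
        rw [hxy]
      | succ m ih =>
        intro x hx y hy hag
        by_cases hm : m < n
        · set j : Fin n := ⟨m, hm⟩ with hjd
          set z : EuclideanSpace ℝ (Fin n) := WithLp.toLp 2 (Function.update x.ofLp j (y j)) with hzd
          have hzH : z ∈ H := by
            rw [hH]; rw [hH] at hx hy
            show 0 < z N
            rcases eq_or_ne N j with h | h
            · rw [hzd, h, WithLp.ofLp_toLp, Function.update_self]; rw [h] at hy; exact hy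
            · rw [hzd, WithLp.ofLp_toLp, Function.update_of_ne h]; exact hx
          have h1 : lam x = lam z := lemB x hx z hzH j
            (fun k hk => by rw [hzd]; exact (Function.update_of_ne hk _ _).symm)
          have h2 : lam z = lam y := by
            refine ih z hzH y hy (fun k hk => ?_)
            rcases eq_or_ne k j with h | h
            · rw [hzd, h, WithLp.ofLp_toLp, Function.update_self]
            · rw [hzd, WithLp.ofLp_toLp, Function.update_of_ne h]
              refine hag k ?_
              have hkm : (k : ℕ) ≠ m := fun hc => h (Fin.ext (by rw [hc, hjd]))
              omega
          rw [h1, h2]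
        · refine ih x hx y hy (fun k hk => ?_)
          exact absurd hk (by have := k.2; omega)
    intro x hx y hy
    exact ind n x hx y hy (fun k hk => absurd hk (by have := k.2; omega))
  -- base point
  have hn' : 0 < n := by omega
  set x₀ : EuclideanSpace ℝ (Fin n) := EuclideanSpace.single N 1 with hx₀d
  have hx₀ : x₀ ∈ H := by
    rw [hH]
    show (0:ℝ) < x₀ N
    rw [hx₀d]
    simp [EuclideanSpace.single_apply]
  set a := lam x₀ with had
  -- the bilinear form Q
  set Q : EuclideanSpace ℝ (Fin n) →L[ℝ] EuclideanSpace ℝ (Fin n) →L[ℝ] ℝ :=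
    ∑ k : Fin n, (EuclideanSpace.proj (𝕜 := ℝ) k).smulRight (EuclideanSpace.proj (𝕜 := ℝ) k)
    with hQd
  have hQz : ∀ (z : EuclideanSpace ℝ (Fin n)) (k : Fin n),
      Q z (EuclideanSpace.single k 1) = z k := by
    intro z k
    rw [hQd]
    have h1 : (∑ m : Fin n, (EuclideanSpace.proj (𝕜 := ℝ) m).smulRight
        (EuclideanSpace.proj (𝕜 := ℝ) m)) z (EuclideanSpace.single k 1)
        = ∑ m : Fin n, z m * (EuclideanSpace.single k (1:ℝ)) m := by
      simp only [ContinuousLinearMap.sum_apply, ContinuousLinearMap.smulRight_apply,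
        ContinuousLinearMap.coe_smul', Pi.smul_apply, smul_eq_mul]
      rfl
    rw [h1]
    rw [Finset.sum_congr rfl (fun m _ => by
      rw [EuclideanSpace.single_apply])]
    simp
  -- u is C² on H
  have hu2 : ContDiffOn ℝ 2 u H := by
    rw [hu_def]
    exact (((EuclideanSpace.proj (𝕜 := ℝ) N).contDiff).contDiffOn).mul hξ
  have hu' : ContDiffOn ℝ 1 (fun z => fderiv ℝ u z) H := hu2.fderiv_of_isOpen hHo (by norm_num)
  have hu'd : ∀ z ∈ H, DifferentiableAt ℝ (fun w => fderiv ℝ u w) z := fun z hz =>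
    ((hu'.differentiableOn (by norm_num)).differentiableAt (hHo.mem_nhds hz))
  -- entries of the second derivative of u
  have hBu : ∀ z ∈ H, ∀ i' j' : Fin n,
      fderiv ℝ (fun w => fderiv ℝ u w) z (EuclideanSpace.single i' 1)
        (EuclideanSpace.single j' 1) = if i' = j' then a else 0 := by
    intro z hz i' j'
    obtain ⟨D, hD, hDe⟩ := key z hz j'
    have hap : HasFDerivAt (fun w => fderiv ℝ u w (EuclideanSpace.single j' 1))
        ((fderiv ℝ (fun w => fderiv ℝ u w) z).flip (EuclideanSpace.single j' 1)) z := by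
      simpa using (hu'd z hz).hasFDerivAt.clm_apply
        (hasFDerivAt_const (EuclideanSpace.single j' (1:ℝ)) z)
    have hfun : (pd j' u) = (fun w => fderiv ℝ u w (EuclideanSpace.single j' 1)) :=
      funext fun w => hpd j' u w
    rw [hfun] at hD
    have huniq := hD.unique hap
    calc fderiv ℝ (fun w => fderiv ℝ u w) z (EuclideanSpace.single i' 1)
          (EuclideanSpace.single j' 1)
        = ((fderiv ℝ (fun w => fderiv ℝ u w) z).flip (EuclideanSpace.single j' 1))
          (EuclideanSpace.single i' 1) := rfl
      _ = D (EuclideanSpace.single i' 1) := by rw [← huniq]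
      _ = if i' = j' then lam z else 0 := hDe i'
      _ = if i' = j' then a else 0 := by rw [had, lemC z hz x₀ hx₀]
  -- the gradient of u is affine
  have hGd : ∀ z ∈ H, HasFDerivAt (fun w => fderiv ℝ u w - (a • Q) w)
      (fderiv ℝ (fun w => fderiv ℝ u w) z - a • Q) z := fun z hz =>
    (hu'd z hz).hasFDerivAt.sub (by exact (a • Q).hasFDerivAt)
  have hG0 : ∀ z ∈ H, fderiv ℝ (fun w => fderiv ℝ u w) z - a • Q = 0 := by
    intro z hz
    have heq2 : fderiv ℝ (fun w => fderiv ℝ u w) z = a • Q := by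
      refine euclid_clm_ext fun i' => ?_
      refine euclid_clm_ext fun j' => ?_
      rw [hBu z hz i' j']
      have h2 : (a • Q) (EuclideanSpace.single i' 1) (EuclideanSpace.single j' 1)
          = a * (Q (EuclideanSpace.single i' 1) (EuclideanSpace.single j' 1)) := rfl
      rw [h2, hQz]
      rcases eq_or_ne i' j' with h | h
      · rw [h]; simp [EuclideanSpace.single_apply]
      · simp [EuclideanSpace.single_apply, h, Ne.symm h]
    rw [heq2, sub_self]
  have hGconst : ∀ z ∈ H, fderiv ℝ u z - (a • Q) z = fderiv ℝ u x₀ - (a • Q) x₀ := by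
    intro z hz
    exact hHc.is_const_of_fderivWithin_eq_zero
      (fun w hw => ((hGd w hw).differentiableAt).differentiableWithinAt)
      (fun w hw => by rw [fderivWithin_of_isOpen hHo hw, (hGd w hw).fderiv, hG0 w hw]) hz hx₀
  set L : EuclideanSpace ℝ (Fin n) →L[ℝ] ℝ := fderiv ℝ u x₀ - (a • Q) x₀ with hLd
  have hfd_u : ∀ z ∈ H, fderiv ℝ u z = L + (a • Q) z := by
    intro z hz
    have h3 := hGconst z hz
    exact sub_eq_iff_eq_add.mp h3
  -- u minus the quadratic is constant
  have hφd : ∀ z ∈ H, HasFDerivAt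
      (fun w : EuclideanSpace ℝ (Fin n) => u w - ((a/2) * (∑ k : Fin n, w k * w k) + L w))
      (0 : EuclideanSpace ℝ (Fin n) →L[ℝ] ℝ) z := by
    intro z hz
    have huz : HasFDerivAt u ((z N) • fderiv ℝ ξ z + (ξ z) • EuclideanSpace.proj (𝕜 := ℝ) N)
        z := by
      rw [hu_def]
      exact (hproj N z).mul (hξd z hz).hasFDerivAt
    have hud : HasFDerivAt u (fderiv ℝ u z) z := by rw [huz.fderiv]; exact huz
    have hq : HasFDerivAt (fun w : EuclideanSpace ℝ (Fin n) => ∑ k : Fin n, w k * w k)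
        (∑ k : Fin n, ((z k) • EuclideanSpace.proj (𝕜 := ℝ) k
          + (z k) • EuclideanSpace.proj (𝕜 := ℝ) k)) z :=
      HasFDerivAt.fun_sum (fun k _ => (hproj k z).mul (hproj k z))
    have h2 := (hq.const_mul (a/2)).add (L.hasFDerivAt)
    have h3 := hud.sub h2
    have hzero : fderiv ℝ u z - ((a/2) • (∑ k : Fin n, ((z k) • EuclideanSpace.proj (𝕜 := ℝ) k
        + (z k) • EuclideanSpace.proj (𝕜 := ℝ) k)) + L) = 0 := by
      rw [hfd_u z hz]
      refine euclid_clm_ext fun k => ?_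
      have e1 : ((L + (a • Q) z) - ((a/2) • (∑ k : Fin n, ((z k) • EuclideanSpace.proj (𝕜 := ℝ) k
          + (z k) • EuclideanSpace.proj (𝕜 := ℝ) k)) + L)) (EuclideanSpace.single k 1)
          = (L (EuclideanSpace.single k 1) + a * (Q z (EuclideanSpace.single k 1)))
            - ((a/2) * ((∑ m : Fin n, ((z m) • EuclideanSpace.proj (𝕜 := ℝ) m
              + (z m) • EuclideanSpace.proj (𝕜 := ℝ) m)) (EuclideanSpace.single k 1))
              + L (EuclideanSpace.single k 1)) := rfl
      rw [e1, hQz]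
      have e2 : (∑ m : Fin n, ((z m) • EuclideanSpace.proj (𝕜 := ℝ) m
          + (z m) • EuclideanSpace.proj (𝕜 := ℝ) m)) (EuclideanSpace.single k 1)
          = ∑ m : Fin n, (z m * (EuclideanSpace.single k (1:ℝ)) m
            + z m * (EuclideanSpace.single k (1:ℝ)) m) := by
        simp only [ContinuousLinearMap.sum_apply, ContinuousLinearMap.add_apply,
          ContinuousLinearMap.coe_smul', Pi.smul_apply, smul_eq_mul]
        rfl
      rw [e2]
      rw [Finset.sum_congr rfl (fun m _ => by rw [EuclideanSpace.single_apply])]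
      simp only [mul_ite, mul_one, mul_zero, ← two_mul]
      rw [Finset.sum_ite_eq' Finset.univ k (fun m => 2 * z m)]
      simp only [Finset.mem_univ, if_true, ContinuousLinearMap.zero_apply]
      ring
    rw [← hzero]
    exact h3
  have hφconst : ∀ z ∈ H, u z - ((a/2) * (∑ k : Fin n, z k * z k) + L z)
      = u x₀ - ((a/2) * (∑ k : Fin n, x₀ k * x₀ k) + L x₀) := by
    intro z hz
    exact hHc.is_const_of_fderivWithin_eq_zero
      (fun w hw => ((hφd w hw).differentiableAt).differentiableWithinAt)
      (fun w hw => by rw [fderivWithin_of_isOpen hHo hw, (hφd w hw).fderiv]) hz hx₀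
  set C : ℝ := u x₀ - ((a/2) * (∑ k : Fin n, x₀ k * x₀ k) + L x₀) with hCd
  set i0 : Fin n := ⟨0, hn'⟩ with hi0
  refine ⟨a, fun k => L (EuclideanSpace.single k 1), fun k => if k = i0 then C else 0, ?_⟩
  intro x hx
  have hxN := hxne x hx
  have hux : u x = (a/2) * (∑ k : Fin n, x k * x k) + L x + C := by
    have h4 := hφconst x hx
    linarith
  have hLx : L x = ∑ k : Fin n, x k * L (EuclideanSpace.single k 1) := by
    conv_lhs => rw [euclid_sum_single x]
    rw [map_sum]
    exact Finset.sum_congr rfl fun k _ => by rw [map_smul]; rfl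
  have hsum : ∑ i : Fin n, ((a / 2) * (x i) ^ 2 + L (EuclideanSpace.single i 1) * x i
      + (if i = i0 then C else 0))
      = (a/2) * (∑ k : Fin n, x k * x k) + L x + C := by
    rw [Finset.sum_add_distrib, Finset.sum_add_distrib]
    rw [Finset.sum_ite_eq' Finset.univ i0 (fun _ => C)]
    rw [hLx, ← Finset.mul_sum]
    simp only [Finset.mem_univ, if_true]
    congr 1
    · congr 1
      · congr 1
        exact Finset.sum_congr rfl fun k _ => by ring
      · exact Finset.sum_congr rfl fun k _ => by ring
  rw [hsum]
  have hu_x : x N * ξ x = u x := by rw [hu_def]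
  rw [← hux, ← hu_x]
  field_simp
end
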